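/- For every real L > 1 with L not an integer, there exists a continuous function f : [0, L] → ℝ with f(0) = f(L) = 0 such that for all x ∈ [0, L-1], f(x+1) ≠ f(x). -/

import Mathlib

theorem universal_chord_negative (L : ℝ) (hL : 1 < L) (hnotint : ∀ n : ℤ, L ≠ n) :
    ∃ f : ℝ → ℝ, ContinuousOn f (Set.Icc 0 L) ∧ f 0 = 0 ∧ f L = 0 ∧
      ∀ x ∈ Set.Icc (0 : ℝ) (L - 1), f (x + 1) ≠ f x := by
  have hL0 : L ≠ 0 := by intro h; exact hnotint 0 (by simpa using h)
  have hsin : Real.sin (Real.pi * L) ≠ 0 := by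
    intro h
    rw [Real.sin_eq_zero_iff] at h
    obtain ⟨n, hn⟩ := h
    have : L = n := by
      have h2 : L * Real.pi = (n : ℝ) * Real.pi := by rw [hn]; ring
      exact (mul_right_cancel₀ Real.pi_ne_zero h2)
    exact hnotint n this
  refine ⟨fun x => Real.sin (Real.pi * x) ^ 2 - x * (Real.sin (Real.pi * L) ^ 2 / L),
    ?_, by simp, by field_simp; ring, ?_⟩
  · exact (Continuous.sub ((Real.continuous_sin.comp (continuous_const.mul continuous_id)).pow 2)
      (continuous_id.mul continuous_const)).continuousOn
  · intro x _
    have hper : Real.sin (Real.pi * (x + 1)) = -Real.sin (Real.pi * x) := by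
      rw [mul_add, mul_one, Real.sin_add_pi]
    intro h
    simp only [] at h
    rw [hper] at h
    have : (x + 1) * (Real.sin (Real.pi * L) ^ 2 / L) = x * (Real.sin (Real.pi * L) ^ 2 / L) := by
      nlinarith [h]
    have h2 : Real.sin (Real.pi * L) ^ 2 / L = 0 := by nlinarith [this]
    exact hsin (pow_eq_zero_iff (n := 2) (by norm_num) |>.mp ((div_eq_zero_iff.mp h2).resolve_right hL0))
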